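/- Let {Φ_k}_{k∈K} (K a finite index set) be a partition of X into nonempty subsets, let E_m > 0 and ε_0 ≥ 0, and suppose E'(Φ_k) > 0 for every k. If f satisfies ε_k-differential privacy on each Φ_k where 0 ≤ ε_k ≤ min(ln(E'(Φ_k)/E_m), ε_0) for every k, then for every observed pseudo-location x' ∈ X with Σ_{y∈X} π(y)f(x'|y) > 0, the conditional expected inference error satisfies ExpEr(x') ≥ E_m. -/

import Mathlib

open Finset Real

/-- If {Φ_k} is a partition of X with E'(Φ_k) > 0, E_m > 0, ε_0 ≥ 0,
and f satisfies ε_k-DP on each Φ_k where 0 ≤ ε_k ≤ min(ln(E'(Φ_k)/E_m), ε_0), then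
for every observed x' with positive denominator, ExpEr(x') ≥ E_m. -/
theorem stmt_1 {X : Type*} [Fintype X] [Nonempty X] [MetricSpace X]
    (pr : X → ℝ) (hprpos : ∀ x, 0 < pr x) (hprsum : ∑ x, pr x = 1)
    (f : X → X → ℝ) (hf0 : ∀ x x', 0 ≤ f x x') (hf1 : ∀ x, ∑ x', f x x' = 1)
    {K : Type*} [Fintype K] (Φ : K → Finset X)
    (hne : ∀ k, (Φ k).Nonempty)
    (hdisj : ∀ k l, k ≠ l → Disjoint (Φ k) (Φ l))
    (hcov : ∀ x : X, ∃ k, x ∈ Φ k)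
    (Em : ℝ) (hEm : 0 < Em)
    (ε₀ : ℝ) (hε₀ : 0 ≤ ε₀)
    (hEppos : ∀ k,
      0 < univ.inf' univ_nonempty
            (fun xhat => ∑ x ∈ Φ k, (pr x / ∑ y ∈ Φ k, pr y) * dist xhat x))
    (ε : K → ℝ)
    (hε : ∀ k, 0 ≤ ε k ∧
      ε k ≤ min
        (Real.log
          ((univ.inf' univ_nonempty
              (fun xhat => ∑ x ∈ Φ k, (pr x / ∑ y ∈ Φ k, pr y) * dist xhat x)) / Em))
        ε₀)
    (hDP : ∀ k, ∀ x ∈ Φ k, ∀ y ∈ Φ k, ∀ x' : X, f x x' ≤ Real.exp (ε k) * f y x')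
    (x' : X) (hden : 0 < ∑ y, pr y * f y x') :
    Em ≤
      univ.inf' univ_nonempty
        (fun xhat => ∑ x, (pr x * f x x' / ∑ y, pr y * f y x') * dist xhat x) := by
  classical
  -- classify each point into its unique block
  choose κ hκ using hcov
  have hΦ : ∀ k, Φ k = univ.filter (fun x => κ x = k) := by
    intro k
    ext x
    simp only [mem_filter, mem_univ, true_and]
    constructor
    · intro hx
      by_contra h
      exact (Finset.disjoint_left.mp (hdisj k (κ x) (fun e => h e.symm)) hx) (hκ x)
    · rintro rfl; exact hκ x
  have hpart : ∀ g : X → ℝ, ∑ x, g x = ∑ k, ∑ x ∈ Φ k, g x := by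
    intro g
    rw [← Finset.sum_fiberwise univ κ g]
    exact Finset.sum_congr rfl fun k _ => by rw [hΦ k]
  apply Finset.le_inf'
  intro xhat _
  have hrw : ∀ x : X, (pr x * f x x' / ∑ y, pr y * f y x') * dist xhat x
      = (pr x * f x x' * dist xhat x) / ∑ y, pr y * f y x' := fun x => by ring
  simp_rw [hrw]
  rw [← Finset.sum_div, le_div_iff₀ hden]
  -- per-cluster key inequality
  have key : ∀ k, Em * (∑ y ∈ Φ k, pr y * f y x')
      ≤ ∑ x ∈ Φ k, pr x * f x x' * dist xhat x := by
    intro k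
    have hEpos := hEppos k
    have hεk : ε k ≤ Real.log
        ((univ.inf' univ_nonempty
          (fun xhat => ∑ x ∈ Φ k, (pr x / ∑ y ∈ Φ k, pr y) * dist xhat x)) / Em) :=
      le_trans (hε k).2 (min_le_left _ _)
    set P := ∑ y ∈ Φ k, pr y with hP
    set E := univ.inf' univ_nonempty
        (fun xhat => ∑ x ∈ Φ k, (pr x / P) * dist xhat x) with hE
    set Dk := ∑ y ∈ Φ k, pr y * f y x' with hDk
    have hPpos : 0 < P := Finset.sum_pos (fun y _ => hprpos y) (hne k)
    have hDknn : 0 ≤ Dk := Finset.sum_nonneg fun y _ => mul_nonneg (hprpos y).le (hf0 y x')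
    have hexppos : (0:ℝ) < Real.exp (ε k) := Real.exp_pos _
    have hA : ∀ x ∈ Φ k, Dk ≤ Real.exp (ε k) * P * f x x' := by
      intro x hx
      calc Dk ≤ ∑ y ∈ Φ k, pr y * (Real.exp (ε k) * f x x') := by
            apply Finset.sum_le_sum
            intro y hy
            exact mul_le_mul_of_nonneg_left (hDP k y hy x hx x') (hprpos y).le
        _ = Real.exp (ε k) * P * f x x' := by
            rw [hP, ← Finset.sum_mul]; ring
    have hεE : Real.exp (ε k) ≤ E / Em := by
      calc Real.exp (ε k) ≤ Real.exp (Real.log (E / Em)) := Real.exp_le_exp.mpr hεk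
        _ = E / Em := Real.exp_log (div_pos hEpos hEm)
    have hEmle : Em ≤ E / Real.exp (ε k) := by
      rw [le_div_iff₀ hexppos]
      have := (le_div_iff₀ hEm).mp hεE
      linarith
    have hEle : E ≤ ∑ x ∈ Φ k, (pr x / P) * dist xhat x :=
      Finset.inf'_le _ (mem_univ xhat)
    have hcomp : ∑ x ∈ Φ k, pr x * (Dk / (Real.exp (ε k) * P)) * dist xhat x
        = (Dk / Real.exp (ε k)) * ∑ x ∈ Φ k, (pr x / P) * dist xhat x := by
      simp only [Finset.mul_sum]
      refine Finset.sum_congr rfl fun x _ => ?_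
      field_simp
    have hstep : ∑ x ∈ Φ k, pr x * (Dk / (Real.exp (ε k) * P)) * dist xhat x
        ≤ ∑ x ∈ Φ k, pr x * f x x' * dist xhat x := by
      apply Finset.sum_le_sum
      intro x hx
      have hfx : Dk / (Real.exp (ε k) * P) ≤ f x x' := by
        rw [div_le_iff₀ (by positivity)]
        calc Dk ≤ Real.exp (ε k) * P * f x x' := hA x hx
          _ = f x x' * (Real.exp (ε k) * P) := by ring
      exact mul_le_mul_of_nonneg_right
        (mul_le_mul_of_nonneg_left hfx (hprpos x).le) dist_nonneg
    calc Em * Dk ≤ (E / Real.exp (ε k)) * Dk := mul_le_mul_of_nonneg_right hEmle hDknn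
      _ = (Dk / Real.exp (ε k)) * E := by ring
      _ ≤ (Dk / Real.exp (ε k)) * ∑ x ∈ Φ k, (pr x / P) * dist xhat x :=
          mul_le_mul_of_nonneg_left hEle (by positivity)
      _ = ∑ x ∈ Φ k, pr x * (Dk / (Real.exp (ε k) * P)) * dist xhat x := hcomp.symm
      _ ≤ ∑ x ∈ Φ k, pr x * f x x' * dist xhat x := hstep
  calc Em * ∑ y, pr y * f y x'
      = ∑ k, Em * ∑ y ∈ Φ k, pr y * f y x' := by
        rw [hpart (fun y => pr y * f y x'), Finset.mul_sum]
    _ ≤ ∑ k, ∑ x ∈ Φ k, pr x * f x x' * dist xhat x :=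
        Finset.sum_le_sum fun k _ => key k
    _ = ∑ x, pr x * f x x' * dist xhat x := (hpart _).symm
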